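/- arXiv:1602.07850 — 2 statements merged into one kernel-verified Lean document; each statement's English description precedes it below -/
import Mathlib

section
/- For all nonnegative integers n: r_{2n+1}(s,q) = (1+s) sum_{k=0}^n (-q;q)_k q^{k(k+1)/2} s^k (n choose k)_{q^2} r_{n-k}(s^2, q^2). -/
open Finset

/-- Gaussian (q-)binomial coefficient, defined over any commutative ring by the
Pascal-type recurrence `[n+1, k+1] = [n, k] + q^(k+1) * [n, k+1]`. -/
def qbinom {R : Type*} [CommRing R] (q : R) : ℕ → ℕ → R
  | _, 0 => 1
  | 0, _ + 1 => 0
  | n + 1, k + 1 => qbinom q n k + q ^ (k + 1) * qbinom q n (k + 1)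
/-- Rogers-Szegő polynomial `r_n(s,q) = ∑_{j=0}^n [n,j]_q s^j`. -/
def rs {R : Type*} [CommRing R] (n : ℕ) (s q : R) : R :=
  ∑ j ∈ Finset.range (n + 1), qbinom q n j * s ^ j
section Aux

variable {R : Type*} [CommRing R]

lemma qbinom_zero (q : R) (n : ℕ) : qbinom q n 0 = 1 := by cases n <;> rfl

lemma qbinom_of_lt (q : R) {n k : ℕ} (h : n < k) : qbinom q n k = 0 := by
  induction n generalizing k with
  | zero => cases k with
    | zero => omega
    | succ k => rfl
  | succ n ih =>
    cases k with
    | zero => omega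
    | succ k =>
      show qbinom q n k + q ^ (k+1) * qbinom q n (k+1) = 0
      rw [ih (by omega), ih (by omega)]; ring

lemma qbinom_succ_succ (q : R) (n k : ℕ) :
    qbinom q (n+1) (k+1) = qbinom q n k + q ^ (k+1) * qbinom q n (k+1) := rfl

lemma qbinom_self (q : R) (n : ℕ) : qbinom q n n = 1 := by
  induction n with
  | zero => rfl
  | succ n ih => rw [qbinom_succ_succ, ih, qbinom_of_lt q (Nat.lt_succ_self n)]; ring

/-- I5 : (1-q^(n-k)) [n,k] = (1-q^(k+1)) [n,k+1]  for k ≤ n -/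
lemma qbinom_I5 (q : R) {n k : ℕ} (h : k ≤ n) :
    (1 - q ^ (n - k)) * qbinom q n k = (1 - q ^ (k + 1)) * qbinom q n (k + 1) := by
  induction n generalizing k with
  | zero =>
    interval_cases k
    rw [qbinom_of_lt q (show 0 < 1 by omega)]
    simp
  | succ n ih =>
    rcases Nat.eq_or_lt_of_le h with rfl | hlt
    · rw [Nat.sub_self, qbinom_of_lt q (show n + 1 < n + 1 + 1 by omega)]
      simp
    · have hkn : k ≤ n := by omega
      cases k with
      | zero =>
        have ih0 := ih (Nat.zero_le n)
        rw [Nat.sub_zero, qbinom_zero] at ih0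
        rw [Nat.sub_zero, qbinom_zero, qbinom_succ_succ, qbinom_zero]
        have epow : q ^ 1 * q ^ n = q ^ (n+1) := by rw [← pow_add]; congr 1; omega
        linear_combination q ^ 1 * ih0 + epow
      | succ j =>
        have hj : j ≤ n := by omega
        have hj1 : j + 1 ≤ n := by omega
        have key1 := ih hj
        have key2 := ih hj1
        have epow1 : q ^ (j+1) * q ^ (n - j) = q ^ (n+1) := by
          rw [← pow_add]; congr 1; omega
        have epow2 : q ^ (j+1+1) * q ^ (n - (j+1)) = q ^ (n+1) := by
          rw [← pow_add]; congr 1; omega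
        have e1 : n + 1 - (j + 1) = n - j := by omega
        rw [qbinom_succ_succ, qbinom_succ_succ, e1]
        linear_combination key1 + q^(j+1+1) * key2
          - qbinom q n (j+1) * epow1 + qbinom q n (j+1) * epow2

/-- I4 : (1-q^(k+1)) [n+1,k+1] = (1-q^(n+1)) [n,k]  for k ≤ n -/
lemma qbinom_I4 (q : R) {n k : ℕ} (h : k ≤ n) :
    (1 - q ^ (k + 1)) * qbinom q (n+1) (k+1) = (1 - q ^ (n + 1)) * qbinom q n k := by
  have h5 := qbinom_I5 q h
  have epow : q ^ (k+1) * q ^ (n - k) = q ^ (n+1) := by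
    rw [← pow_add]; congr 1; omega
  rw [qbinom_succ_succ]
  calc (1 - q ^ (k+1)) * (qbinom q n k + q ^ (k+1) * qbinom q n (k+1))
      = (1 - q ^ (k+1)) * qbinom q n k + q^(k+1) * ((1 - q ^ (k+1)) * qbinom q n (k+1)) := by
        ring
    _ = (1 - q ^ (k+1)) * qbinom q n k + q^(k+1) * ((1 - q ^ (n-k)) * qbinom q n k) := by
        rw [h5]
    _ = (1 - q ^ (n+1)) * qbinom q n k := by rw [← mul_assoc, mul_sub, mul_one, epow]; ring

lemma rs_zero (s q : R) : rs 0 s q = 1 := by simp [rs, qbinom]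

lemma rs_a (n : ℕ) (s q : R) : rs (n+1) s q = s * rs n s q + rs n (q*s) q := by
  unfold rs
  rw [Finset.sum_range_succ' (fun k => qbinom q (n+1) k * s ^ k) (n+1)]
  have step : ∀ k ∈ Finset.range (n+1),
      qbinom q (n+1) (k+1) * s ^ (k+1) =
        qbinom q n k * s ^ (k+1) + q^(k+1) * qbinom q n (k+1) * s^(k+1) := by
    intro k _
    rw [qbinom_succ_succ]; ring
  rw [Finset.sum_congr rfl step, Finset.sum_add_distrib]
  have e1 : ∑ k ∈ Finset.range (n+1), qbinom q n k * s ^ (k+1) =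
      s * ∑ k ∈ Finset.range (n+1), qbinom q n k * s ^ k := by
    rw [Finset.mul_sum]
    exact Finset.sum_congr rfl fun k _ => by ring
  have e2 : (∑ k ∈ Finset.range (n+1), q^(k+1) * qbinom q n (k+1) * s^(k+1))
        + qbinom q (n+1) 0 * s ^ 0 =
      ∑ k ∈ Finset.range (n+1), qbinom q n k * (q*s) ^ k := by
    rw [Finset.sum_range_succ' (fun k => qbinom q n k * (q*s)^k) n]
    have : ∑ k ∈ Finset.range (n+1), q^(k+1) * qbinom q n (k+1) * s^(k+1) =
        (∑ k ∈ Finset.range n, qbinom q n (k+1) * (q*s)^(k+1))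
          + q^(n+1) * qbinom q n (n+1) * s^(n+1) := by
      rw [Finset.sum_range_succ (fun k => q^(k+1) * qbinom q n (k+1) * s^(k+1)) n]
      congr 1
      exact Finset.sum_congr rfl fun k _ => by rw [mul_pow]; ring
    rw [this, qbinom_of_lt q (Nat.lt_succ_self n), qbinom_zero, qbinom_zero]
    ring
  rw [e1, add_assoc, e2]

lemma rs_b (n : ℕ) (s q : R) :
    rs (n+1) (q*s) q = rs (n+1) s q - (1 - q^(n+1)) * s * rs n s q := by
  have key : rs (n+1) s q - rs (n+1) (q*s) q = (1 - q^(n+1)) * s * rs n s q := by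
    unfold rs
    rw [← Finset.sum_sub_distrib]
    rw [Finset.sum_range_succ' (fun k => qbinom q (n+1) k * s ^ k - qbinom q (n+1) k * (q*s) ^ k) (n+1)]
    have hz : qbinom q (n+1) 0 * s ^ 0 - qbinom q (n+1) 0 * (q*s) ^ 0 = 0 := by ring
    rw [hz, add_zero]
    have step : ∀ k ∈ Finset.range (n+1),
        qbinom q (n+1) (k+1) * s ^ (k+1) - qbinom q (n+1) (k+1) * (q*s) ^ (k+1) =
          (1 - q^(n+1)) * s * (qbinom q n k * s ^ k) := by
      intro k hk
      have hkn : k ≤ n := by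
        have := Finset.mem_range.mp hk; omega
      have h4 := qbinom_I4 q hkn
      have : qbinom q (n+1) (k+1) * s ^ (k+1) - qbinom q (n+1) (k+1) * (q*s) ^ (k+1) =
          ((1 - q ^ (k+1)) * qbinom q (n+1) (k+1)) * s ^ (k+1) := by
        rw [mul_pow]; ring
      rw [this, h4, pow_succ]; ring
    rw [Finset.sum_congr rfl step, ← Finset.mul_sum]
  linear_combination -key

lemma rs_rec (n : ℕ) (s q : R) :
    rs (n+1) s q = (1+s) * rs n s q - (1 - q^n) * s * rs (n-1) s q := by
  cases n with
  | zero => rw [rs_a, rs_zero, rs_zero]; ring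
  | succ m =>
    rw [rs_a, rs_b]
    have : (m + 1 - 1 : ℕ) = m := by omega
    rw [this]; ring

/-- `(-q;q)_k` -/
def Pp (q : R) (k : ℕ) : R := ∏ i ∈ Finset.range k, (1 + q^(i+1))

/-- `(-q;q)_k q^(k(k-1)/2)` -/
def cc (q : R) (k : ℕ) : R := Pp q k * q^(k*(k-1)/2)

lemma tri_succ (k : ℕ) : (k+1)*k/2 = k*(k-1)/2 + k := by
  cases k with
  | zero => rfl
  | succ j =>
    have h : (j+1+1)*(j+1) = (j+1)*((j+1)-1) + 2*(j+1) := by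
      simp only [Nat.add_sub_cancel]; ring
    rw [h, Nat.add_mul_div_left _ _ (by norm_num : (0:ℕ) < 2)]

lemma cc_succ (q : R) (k : ℕ) : cc q (k+1) = cc q k * q^k * (1 + q^(k+1)) := by
  unfold cc Pp
  rw [Finset.prod_range_succ]
  have e : (k+1)*((k+1)-1)/2 = k*(k-1)/2 + k := by
    simpa using tri_succ k
  rw [e, pow_add]
  ring

def SA (s q : R) (n : ℕ) : R :=
  ∑ k ∈ Finset.range (n+1), cc q k * q^k * s^k * qbinom (q^2) n k * rs (n-k) (s^2) (q^2)
def SB (s q : R) (n : ℕ) : R :=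
  ∑ k ∈ Finset.range (n+1), cc q k * s^k * qbinom (q^2) n k * rs (n-k) (s^2) (q^2)
def SC (s q : R) (n : ℕ) : R :=
  ∑ k ∈ Finset.range (n+1), cc q k * q^(2*k) * s^k * qbinom (q^2) n k * rs (n-k) (s^2) (q^2)
def SumT (s q : R) (n : ℕ) : R :=
  ∑ k ∈ Finset.range (n+1), cc q k * q^(2*k) * s^k * qbinom (q^2) n k * rs (n+1-k) (s^2) (q^2)
def SumD (s q : R) (n : ℕ) : R :=
  ∑ k ∈ Finset.range (n+1), cc q k * q^(2*k) * (1 - (q^2)^(n-k)) * s^k * qbinom (q^2) n k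
    * rs (n-k-1) (s^2) (q^2)

variable (s q : R)

/-- LT -/
lemma ST_eq (n : ℕ) : SumT s q n = (1+s^2) * SC s q n - s^2 * SumD s q n := by
  unfold SumT SC SumD
  rw [Finset.mul_sum, Finset.mul_sum, ← Finset.sum_sub_distrib]
  apply Finset.sum_congr rfl
  intro k hk
  have hkn : k ≤ n := by have := Finset.mem_range.mp hk; omega
  have e : n + 1 - k = (n - k) + 1 := by omega
  rw [e, rs_rec (n-k) (s^2) (q^2)]
  ring

/-- LD -/
lemma SumD_succ (n : ℕ) : SumD s q (n+1) = (1 - q^(2*n+2)) * SC s q n := by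
  unfold SumD SC
  rw [Finset.sum_range_succ]
  have hz : cc q (n+1) * q^(2*(n+1)) * (1 - (q^2)^(n+1-(n+1))) * s^(n+1)
      * qbinom (q^2) (n+1) (n+1) * rs (n+1-(n+1)-1) (s^2) (q^2) = 0 := by
    rw [Nat.sub_self]; ring
  rw [hz, add_zero, Finset.mul_sum]
  apply Finset.sum_congr rfl
  intro k hk
  have hkn : k ≤ n := by have := Finset.mem_range.mp hk; omega
  have e : n + 1 - k - 1 = n - k := by omega
  rw [e]
  have h5 := qbinom_I5 (q^2) (show k ≤ n+1 by omega)
  have h4 := qbinom_I4 (q^2) hkn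
  have e2 : (q^2)^(n+1) = q^(2*n+2) := by ring
  rw [← e2]
  linear_combination (cc q k * q^(2*k) * s^k * rs (n-k) (s^2) (q^2)) * h5
    + (cc q k * q^(2*k) * s^k * rs (n-k) (s^2) (q^2)) * h4

/-- L2 -/
lemma SA_sub_SB (n : ℕ) :
    SA s q (n+1) - SB s q (n+1) = (q^(2*n+2) - 1) * s * SA s q n := by
  unfold SA SB
  rw [← Finset.sum_sub_distrib, Finset.sum_range_succ' _ (n+1)]
  have hz : cc q 0 * q^0 * s^0 * qbinom (q^2) (n+1) 0 * rs (n+1-0) (s^2) (q^2)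
      - cc q 0 * s^0 * qbinom (q^2) (n+1) 0 * rs (n+1-0) (s^2) (q^2) = 0 := by ring
  rw [hz, add_zero, Finset.mul_sum]
  apply Finset.sum_congr rfl
  intro k hk
  have hkn : k ≤ n := by have := Finset.mem_range.mp hk; omega
  have e : n + 1 - (k+1) = n - k := by omega
  rw [e, cc_succ]
  have h4 := qbinom_I4 (q^2) hkn
  have e2 : (q^2)^(n+1) = q^(2*n+2) := by ring
  rw [← e2]
  linear_combination (- cc q k * q^k * s^(k+1) * rs (n-k) (s^2) (q^2)) * h4

/-- L5 -/
lemma SA_sub_SC (n : ℕ) : SA s q n - SC s q n = q * s * SumD s q n := by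
  unfold SA SC SumD
  rw [← Finset.sum_sub_distrib, Finset.mul_sum]
  rcases n with _ | m
  · simp [cc, Pp]
  rw [Finset.sum_range_succ' (fun k => cc q k * q^k * s^k * qbinom (q^2) (m+1) k * rs (m+1-k) (s^2) (q^2)
      - cc q k * q^(2*k) * s^k * qbinom (q^2) (m+1) k * rs (m+1-k) (s^2) (q^2)) (m+1)]
  rw [Finset.sum_range_succ (fun k => q * s * (cc q k * q^(2*k) * (1 - (q^2)^(m+1-k)) * s^k
      * qbinom (q^2) (m+1) k * rs (m+1-k-1) (s^2) (q^2))) (m+1)]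
  have hz1 : cc q 0 * q^0 * s^0 * qbinom (q^2) (m+1) 0 * rs (m+1-0) (s^2) (q^2)
      - cc q 0 * q^(2*0) * s^0 * qbinom (q^2) (m+1) 0 * rs (m+1-0) (s^2) (q^2) = 0 := by ring
  have hz2 : q * s * (cc q (m+1) * q^(2*(m+1)) * (1 - (q^2)^(m+1-(m+1))) * s^(m+1)
      * qbinom (q^2) (m+1) (m+1) * rs (m+1-(m+1)-1) (s^2) (q^2)) = 0 := by
    rw [Nat.sub_self]; ring
  rw [hz1, hz2, add_zero, add_zero]
  apply Finset.sum_congr rfl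
  intro k hk
  have hkn : k ≤ m := by have := Finset.mem_range.mp hk; omega
  have e : m + 1 - (k+1) = m - k := by omega
  have e' : m + 1 - k - 1 = m - k := by omega
  rw [e, e', cc_succ]
  have h5 := qbinom_I5 (q^2) (show k ≤ m+1 by omega)
  linear_combination (- cc q k * q^(2*k+1) * s^(k+1) * rs (m-k) (s^2) (q^2)) * h5

/-- L4 -/
lemma SC_SB_eq (n : ℕ) :
    q * SC s q (n+1) - q^(2*n+3) * SB s q (n+1) = q * (1 - q^(2*n+2)) * SumT s q n := by
  unfold SC SB SumT
  rw [Finset.mul_sum, Finset.mul_sum, Finset.mul_sum, ← Finset.sum_sub_distrib]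
  rw [Finset.sum_range_succ (fun k => q * (cc q k * q^(2*k) * s^k * qbinom (q^2) (n+1) k
        * rs (n+1-k) (s^2) (q^2))
      - q^(2*n+3) * (cc q k * s^k * qbinom (q^2) (n+1) k * rs (n+1-k) (s^2) (q^2))) (n+1)]
  have hz : q * (cc q (n+1) * q^(2*(n+1)) * s^(n+1) * qbinom (q^2) (n+1) (n+1)
        * rs (n+1-(n+1)) (s^2) (q^2))
      - q^(2*n+3) * (cc q (n+1) * s^(n+1) * qbinom (q^2) (n+1) (n+1)
        * rs (n+1-(n+1)) (s^2) (q^2)) = 0 := by ring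
  rw [hz, add_zero]
  apply Finset.sum_congr rfl
  intro k hk
  have hkn : k ≤ n := by have := Finset.mem_range.mp hk; omega
  have h5 := qbinom_I5 (q^2) (show k ≤ n+1 by omega)
  have h4 := qbinom_I4 (q^2) hkn
  have epow : (q^2)^(n+1-k) * q^(2*k) = q^(2*n+2) := by
    rw [← pow_mul, ← pow_add]
    congr 1
    omega
  linear_combination (cc q k * s^k * q * qbinom (q^2) (n+1) k * rs (n+1-k) (s^2) (q^2)) * epow
    + (cc q k * s^k * q * q^(2*k) * rs (n+1-k) (s^2) (q^2)) * h5
    + (cc q k * s^k * q * q^(2*k) * rs (n+1-k) (s^2) (q^2)) * h4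

/-- Split -/
lemma SB_split (n : ℕ) :
    SB s q (n+1) = s * SA s q n + q * s * SC s q n + SumT s q n := by
  unfold SB SA SC SumT
  rw [Finset.sum_range_succ' (fun k => cc q k * s^k * qbinom (q^2) (n+1) k
      * rs (n+1-k) (s^2) (q^2)) (n+1)]
  have hstep : ∀ k ∈ Finset.range (n+1),
      cc q (k+1) * s^(k+1) * qbinom (q^2) (n+1) (k+1) * rs (n+1-(k+1)) (s^2) (q^2) =
        s * (cc q k * q^k * s^k * qbinom (q^2) n k * rs (n-k) (s^2) (q^2))
        + q * s * (cc q k * q^(2*k) * s^k * qbinom (q^2) n k * rs (n-k) (s^2) (q^2))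
        + cc q (k+1) * q^(2*(k+1)) * s^(k+1) * qbinom (q^2) n (k+1) * rs (n-k) (s^2) (q^2) := by
    intro k hk
    have e : n + 1 - (k+1) = n - k := by omega
    rw [e, cc_succ, qbinom_succ_succ]
    ring
  rw [Finset.sum_congr rfl hstep, Finset.sum_add_distrib, Finset.sum_add_distrib,
    ← Finset.mul_sum, ← Finset.mul_sum]
  have hlast : ∑ k ∈ Finset.range (n+1),
      cc q (k+1) * q^(2*(k+1)) * s^(k+1) * qbinom (q^2) n (k+1) * rs (n-k) (s^2) (q^2) =
      ∑ k ∈ Finset.range n,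
      cc q (k+1) * q^(2*(k+1)) * s^(k+1) * qbinom (q^2) n (k+1) * rs (n-k) (s^2) (q^2) := by
    rw [Finset.sum_range_succ]
    rw [qbinom_of_lt (q^2) (Nat.lt_succ_self n)]
    simp
  rw [hlast]
  have hT : ∑ k ∈ Finset.range (n+1),
      cc q k * q^(2*k) * s^k * qbinom (q^2) n k * rs (n+1-k) (s^2) (q^2) =
      (∑ k ∈ Finset.range n,
        cc q (k+1) * q^(2*(k+1)) * s^(k+1) * qbinom (q^2) n (k+1) * rs (n-k) (s^2) (q^2))
      + cc q 0 * q^(2*0) * s^0 * qbinom (q^2) n 0 * rs (n+1-0) (s^2) (q^2) := by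
    rw [Finset.sum_range_succ' (fun k => cc q k * q^(2*k) * s^k * qbinom (q^2) n k
        * rs (n+1-k) (s^2) (q^2)) n]
    congr 1
    apply Finset.sum_congr rfl
    intro k hk
    have e : n + 1 - (k+1) = n - k := by omega
    rw [e]
  rw [hT, qbinom_zero, qbinom_zero]
  ring

/-- S2 -/
lemma SB_rec (n : ℕ) :
    SB s q (n+1) = (1+s)^2 * SA s q n - (1 - q^(2*n+1)) * s * SB s q n := by
  cases n with
  | zero =>
    simp [SB, SA, cc, Pp, rs, qbinom, Finset.sum_range_succ]
    ring
  | succ m =>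
    linear_combination (SB_split s q (m+1)) + (ST_eq s q (m+1))
      - (s^2 + (1+s^2)*q*s) * (SumD_succ s q m)
      - s * (SA_sub_SB s q m)
      - (1+s^2) * (SA_sub_SC s q (m+1))
      + s * (SC_SB_eq s q m)
      + s*q*(1-q^(2*m+2)) * (ST_eq s q m)
      + s^2*(1-q^(2*m+2)) * (SA_sub_SC s q m)

/-- S1' -/
lemma SA_rec (n : ℕ) :
    SA s q (n+1) = SB s q (n+1) - (1 - q^(2*n+2)) * s * SA s q n := by
  linear_combination SA_sub_SB s q n

lemma main_pair (n : ℕ) :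
    rs (2*n+1) s q = (1+s) * SA s q n ∧ rs (2*n) s q = SB s q n := by
  induction n with
  | zero =>
    constructor
    · simp [SA, cc, Pp, rs, qbinom, Finset.sum_range_succ]
    · simp [SB, cc, Pp, rs, qbinom]
  | succ m ih =>
    obtain ⟨h1, h2⟩ := ih
    have hB : rs (2*(m+1)) s q = SB s q (m+1) := by
      have e : 2*(m+1) = (2*m+1) + 1 := by ring
      rw [e, rs_rec, show 2*m+1-1 = 2*m from by omega, h1, h2, SB_rec]
      ring
    have hA : rs (2*(m+1)+1) s q = (1+s) * SA s q (m+1) := by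
      rw [rs_rec (2*(m+1)) s q, show 2*(m+1)-1 = 2*m+1 from by omega, hB, h1, SA_rec]
      ring
    exact ⟨hA, hB⟩

lemma tri2 (k : ℕ) : k*(k+1)/2 = k*(k-1)/2 + k := by
  rw [Nat.mul_comm k (k+1)]
  exact tri_succ k

end Aux

theorem stmt9 {R : Type*} [CommRing R] (s q : R) (n : ℕ) :
    rs (2 * n + 1) s q =
      (1 + s) * ∑ k ∈ Finset.range (n + 1),
        (∏ i ∈ Finset.range k, (1 + q ^ (i + 1))) * q ^ (k * (k + 1) / 2) * s ^ k *
          qbinom (q ^ 2) n k * rs (n - k) (s ^ 2) (q ^ 2) := by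
  rw [(main_pair s q n).1]
  congr 1
  unfold SA cc Pp
  apply Finset.sum_congr rfl
  intro k hk
  rw [tri2 k, pow_add]
  ring
end

section
/- For every fixed n >= 1 and every integer m >= 2, the normalized sums F(2n, q^m) = (sum_{j=0}^{2n} (-1)^j q^{mj} (2n choose j)_q) / (q;q^2)_n satisfy the Chebyshev-type recurrence F(2n, q^m) = (1 + q^{m-1}) F(2n, q^{m-1}) - q^{m-1} q^{2n} F(2n, q^{m-2}), with F(2n, q^0) = 1 and F(2n, q^1) = 1. -/
open Finset

/-- Normalized even Rogers-Szegő polynomial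
`F(2n, s) = (∑_{j=0}^{2n} (-s)^j [2n, j]_q) / (q; q^2)_n` in the field ℚ(q). -/
noncomputable def Feven (n : ℕ) (s : RatFunc ℚ) : RatFunc ℚ :=
  (∑ j ∈ Finset.range (2 * n + 1), (-s) ^ j * qbinom RatFunc.X (2 * n) j) /
    ∏ i ∈ Finset.range n, (1 - RatFunc.X ^ (2 * i + 1))

section Aux

variable {R : Type*} [CommRing R] (q : R)

lemma qbinom_eq_zero : ∀ {n k : ℕ}, n < k → qbinom q n k = 0
  | 0, _ + 1, _ => rfl
  | n + 1, k + 1, h => by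
      rw [qbinom, qbinom_eq_zero (show n < k by omega),
        qbinom_eq_zero (show n < k + 1 by omega)]
      ring

/-- The Rogers–Szegő type sum. -/
def Hsum (N : ℕ) (s : R) : R := ∑ j ∈ Finset.range (N + 1), (-s) ^ j * qbinom q N j

lemma Hsum_succ (N : ℕ) (s : R) :
    Hsum q (N + 1) s = Hsum q N (q * s) - s * Hsum q N s := by
  have key : ∀ t : R, ∑ k ∈ Finset.range (N + 1), (-t) ^ (k + 1) * qbinom q N (k + 1)
      = Hsum q N t - 1 := by
    intro t
    rw [Finset.sum_range_succ, qbinom_eq_zero q (Nat.lt_succ_self N)]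
    unfold Hsum
    rw [Finset.sum_range_succ' (fun j => (-t) ^ j * qbinom q N j)]
    simp [qbinom]
  have step : ∀ k, (-s) ^ (k + 1) * qbinom q (N + 1) (k + 1)
      = (-s) * ((-s) ^ k * qbinom q N k) + (-(q * s)) ^ (k + 1) * qbinom q N (k + 1) := by
    intro k
    rw [qbinom]
    ring
  have hs : Hsum q N s = ∑ k ∈ Finset.range (N + 1), (-s) ^ k * qbinom q N k := rfl
  have hs' : Hsum q N (q * s) = ∑ k ∈ Finset.range (N + 1), (-(q * s)) ^ k * qbinom q N k := rfl
  unfold Hsum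
  rw [Finset.sum_range_succ' (fun j => (-s) ^ j * qbinom q (N + 1) j),
    Finset.sum_congr rfl (fun k _ => step k), Finset.sum_add_distrib, ← Finset.mul_sum,
    key (q * s), ← hs, ← hs', show qbinom q (N + 1) 0 = 1 from rfl]
  ring

lemma Hsum_shift : ∀ (N : ℕ) (s : R),
    Hsum q (N + 1) (q * s) = Hsum q N (q * s) - q ^ (N + 1) * s * Hsum q N s
  | 0, s => by
      simp [Hsum, qbinom, Finset.sum_range_succ]
      ring
  | N + 1, s => by
      have h1 := Hsum_succ q (N + 1) (q * s)
      have h2 := Hsum_shift (N) (q * s)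
      have h3 := Hsum_shift N s
      have h4 := Hsum_succ q N s
      have h5 := Hsum_succ q N (q * s)
      linear_combination h1 + h2 - q * s * h3 - h5 + q ^ (N + 1 + 1) * s * h4

lemma gauss : ∀ n : ℕ,
    Hsum q (2 * n) 1 = ∏ i ∈ Finset.range n, (1 - q ^ (2 * i + 1)) ∧
      Hsum q (2 * n) q = ∏ i ∈ Finset.range n, (1 - q ^ (2 * i + 1))
  | 0 => by simp [Hsum, qbinom]
  | n + 1 => by
      obtain ⟨ih1, ih2⟩ := gauss n
      have e : 2 * (n + 1) = 2 * n + 1 + 1 := by ring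
      have h1 := Hsum_succ q (2 * n + 1) 1
      have h2 := Hsum_shift q (2 * n) 1
      have h3 := Hsum_succ q (2 * n) 1
      have h4 := Hsum_shift q (2 * n + 1) 1
      rw [mul_one] at h1 h2 h3 h4
      constructor
      · rw [e, h1, h2, h3, ih1, ih2, Finset.prod_range_succ]
        ring
      · rw [e, h4, h2, h3, ih1, ih2, Finset.prod_range_succ]
        ring

end Aux

theorem stmt18 (n : ℕ) (hn : 1 ≤ n) (m : ℕ) (hm : 2 ≤ m) :
    Feven n (RatFunc.X ^ m) =
      (1 + RatFunc.X ^ (m - 1)) * Feven n (RatFunc.X ^ (m - 1)) -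
        RatFunc.X ^ (m - 1) * RatFunc.X ^ (2 * n) * Feven n (RatFunc.X ^ (m - 2)) ∧
    Feven n (RatFunc.X ^ 0) = 1 ∧ Feven n (RatFunc.X ^ 1) = 1 := by
  have hFeven : ∀ s : RatFunc ℚ, Feven n s =
      Hsum RatFunc.X (2 * n) s / ∏ i ∈ Finset.range n, (1 - RatFunc.X ^ (2 * i + 1)) :=
    fun s => rfl
  have hD : (∏ i ∈ Finset.range n, (1 - (RatFunc.X : RatFunc ℚ) ^ (2 * i + 1))) ≠ 0 := by
    refine Finset.prod_ne_zero_iff.mpr fun i _ => ?_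
    have hpoly : (1 - Polynomial.X ^ (2 * i + 1) : Polynomial ℚ) ≠ 0 := by
      intro h
      have h0 := congrArg (fun p => Polynomial.coeff p 0) h
      simp [Polynomial.coeff_X_pow] at h0
    have h1 := (map_ne_zero_iff (algebraMap (Polynomial ℚ) (RatFunc ℚ))
      (IsFractionRing.injective _ _)).mpr hpoly
    simpa [map_sub, map_pow, RatFunc.algebraMap_X] using h1
  obtain ⟨k, rfl⟩ : ∃ k, m = k + 2 := ⟨m - 2, by omega⟩
  rw [show k + 2 - 1 = k + 1 from rfl, show k + 2 - 2 = k from rfl]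
  refine ⟨?_, ?_, ?_⟩
  · have h1 := Hsum_succ (RatFunc.X : RatFunc ℚ) (2 * n) (RatFunc.X * RatFunc.X ^ k)
    have h2 := Hsum_shift (RatFunc.X : RatFunc ℚ) (2 * n) (RatFunc.X ^ k)
    have e1 : (RatFunc.X : RatFunc ℚ) * RatFunc.X ^ k = RatFunc.X ^ (k + 1) := by ring
    have e2 : (RatFunc.X : RatFunc ℚ) * (RatFunc.X * RatFunc.X ^ k) = RatFunc.X ^ (k + 2) := by
      ring
    rw [e2, e1] at h1
    rw [e1] at h2
    have hnum : Hsum (RatFunc.X : RatFunc ℚ) (2 * n) (RatFunc.X ^ (k + 2))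
        = (1 + RatFunc.X ^ (k + 1)) * Hsum RatFunc.X (2 * n) (RatFunc.X ^ (k + 1))
          - RatFunc.X ^ (k + 1) * RatFunc.X ^ (2 * n) *
              Hsum RatFunc.X (2 * n) (RatFunc.X ^ k) := by
      linear_combination h2 - h1
    rw [hFeven, hFeven, hFeven, hnum, sub_div, mul_div_assoc, mul_div_assoc]
  · rw [pow_zero, hFeven, (gauss RatFunc.X n).1, div_self hD]
  · rw [pow_one, hFeven, (gauss RatFunc.X n).2, div_self hD]
end
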